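/- Let ℓ > 0, c > 0, and suppose (x_n)_{n≥1} is a sequence of positive reals with x_n → ∞ satisfying tan(x_n ℓ) = c/x_n and x_n ∈ (nπ/ℓ, nπ/ℓ + π/(2ℓ)) for all large n. Then x_n = nπ/ℓ + c/(nπ) + O(1/n²) as n → ∞. -/

import Mathlib

open Real in
lemma my_arctan_cubic_lb (y : ℝ) (hy : 0 ≤ y) : y - y^3/3 ≤ Real.arctan y := by
  have key : Monotone (fun t : ℝ => Real.arctan t + t^3/3 - t) := by
    apply monotone_of_deriv_nonneg
    · exact fun z => ((Real.differentiable_arctan z).add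
        (((differentiable_pow 3) z).div_const 3)).sub (differentiable_id z)
    · intro z
      have h : HasDerivAt (fun t : ℝ => Real.arctan t + t^3/3 - t)
          (1/(1+z^2) + ((3:ℕ) * z^(3-1))/3 - 1) z :=
        ((Real.hasDerivAt_arctan z).add ((hasDerivAt_pow 3 z).div_const 3)).sub (hasDerivAt_id z)
      rw [h.deriv]
      have h1 : (0:ℝ) < 1 + z^2 := by positivity
      have h2 : 1 - z^2 ≤ 1/(1+z^2) := by
        rw [le_div_iff₀ h1]; nlinarith [sq_nonneg (z^2)]
      push_cast
      nlinarith
  have := key hy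
  simp only [Real.arctan_zero] at this
  nlinarith

open Real in
lemma my_arctan_ub (y : ℝ) (hy : 0 ≤ y) : Real.arctan y ≤ y := by
  have key : Monotone (fun t : ℝ => t - Real.arctan t) := by
    apply monotone_of_deriv_nonneg
    · exact fun z => (differentiable_id z).sub (Real.differentiable_arctan z)
    · intro z
      have h : HasDerivAt (fun t : ℝ => t - Real.arctan t) (1 - 1/(1+z^2)) z :=
        (hasDerivAt_id z).sub (Real.hasDerivAt_arctan z)
      rw [h.deriv]
      have h1 : (0:ℝ) < 1 + z^2 := by positivity
      have h2 : 1/(1+z^2) ≤ 1 := by rw [div_le_one h1]; nlinarith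
      linarith
  have := key hy
  simp only [Real.arctan_zero] at this
  linarith

open Real Filter Asymptotics in
/-- Asymptotic localization of roots of `tan(xℓ) = c/x` in the bands
`(nπ/ℓ, nπ/ℓ + π/(2ℓ))`: the roots satisfy `x_n = nπ/ℓ + c/(nπ) + O(1/n²)`. -/
theorem tan_characteristic_roots_asymptotics
    (ℓ c : ℝ) (hℓ : 0 < ℓ) (hc : 0 < c)
    (x : ℕ → ℝ) (hxpos : ∀ n, 0 < x n)
    (hxtop : Tendsto x atTop atTop)
    (hroot : ∀ n, Real.tan (x n * ℓ) = c / x n)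
    (hband : ∀ᶠ n : ℕ in atTop,
        x n ∈ Set.Ioo ((n : ℝ) * π / ℓ) ((n : ℝ) * π / ℓ + π / (2 * ℓ))) :
    (fun n : ℕ => x n - ((n : ℝ) * π / ℓ + c / ((n : ℝ) * π)))
      =O[atTop] (fun n : ℕ => 1 / (n : ℝ) ^ 2) := by
  rw [Asymptotics.isBigO_iff]
  refine ⟨c/(2*π) + c^3*ℓ^2/(3*π^3), ?_⟩
  filter_upwards [hband, eventually_ge_atTop 1] with n hb hn
  have hπ := Real.pi_pos
  set N : ℝ := (n : ℝ) with hNdef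
  have hN : (1:ℝ) ≤ N := by simp only [hNdef]; exact_mod_cast hn
  have hN0 : (0:ℝ) < N := lt_of_lt_of_le one_pos hN
  have hxl : N * π < x n * ℓ := by
    have := hb.1
    rw [div_lt_iff₀ hℓ] at this
    linarith
  have hxu : x n * ℓ < N * π + π/2 := by
    have h := mul_lt_mul_of_pos_right hb.2 hℓ
    calc x n * ℓ < (N * π / ℓ + π / (2*ℓ)) * ℓ := h
      _ = N * π + π/2 := by field_simp
  set t : ℝ := x n * ℓ - N * π with htdef
  have ht0 : 0 < t := by rw [htdef]; linarith
  have ht1 : t < π/2 := by rw [htdef]; linarith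
  have htan : Real.tan t = c / x n := by
    have hp := (Real.tan_periodic.nat_mul n) t
    have heq : t + (n:ℝ) * π = x n * ℓ := by rw [htdef]; simp only [hNdef]; ring
    rw [heq] at hp
    rw [← hp, hroot n]
  have harctan : Real.arctan (c / x n) = t := by
    rw [← htan]
    exact Real.arctan_tan (by linarith) ht1
  set y : ℝ := c / x n with hydef
  have hx0 : 0 < x n := hxpos n
  have hy0 : 0 < y := div_pos hc hx0
  have hxℓpos : 0 < x n * ℓ := mul_pos hx0 hℓ
  have hNπ : 0 < N * π := mul_pos hN0 hπ
  have hyle : y ≤ c * ℓ / (N * π) := by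
    rw [hydef, div_le_div_iff₀ hx0 hNπ]
    nlinarith
  have hE : x n - (N * π / ℓ + c / (N * π)) = t/ℓ - c/(N*π) := by
    rw [htdef]; field_simp; ring
  have hyℓ : y/ℓ = c/(x n * ℓ) := by rw [hydef, div_div]
  -- upper bound
  have hub : t/ℓ - c/(N*π) ≤ 0 := by
    have h1 : t ≤ y := harctan ▸ my_arctan_ub y hy0.le
    have h2 : y/ℓ ≤ c/(N*π) := by
      rw [hyℓ, div_le_div_iff₀ hxℓpos hNπ]
      nlinarith
    have h3 : t/ℓ ≤ y/ℓ := by gcongr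
    linarith
  -- lower bound pieces
  have hB : c/(N*π) - c/(x n * ℓ) ≤ c/(2*π)/N^2 := by
    rw [div_sub_div _ _ hNπ.ne' hxℓpos.ne', div_div, div_le_div_iff₀
      (mul_pos hNπ hxℓpos) (by positivity)]
    have h1 : x n * ℓ - N*π ≤ π/2 := by linarith
    nlinarith [mul_pos hc hπ, mul_pos hc (mul_pos hπ hπ), sq_nonneg N,
      mul_le_mul_of_nonneg_left h1 (show (0:ℝ) ≤ c * (2*π*N^2) by positivity),
      mul_le_mul_of_nonneg_left hxl.le (show (0:ℝ) ≤ c * (N*π) by positivity)]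
  have hy3 : y^3/(3*ℓ) ≤ c^3*ℓ^2/(3*π^3)/N^2 := by
    have h3 : y^3 ≤ (c*ℓ)^3/(N*π)^3 := by
      rw [← div_pow]; exact pow_le_pow_left₀ hy0.le hyle 3
    have h4 : y^3 * (N*π)^3 ≤ (c*ℓ)^3 := by
      rw [← le_div_iff₀ (by positivity)]; exact h3
    have h5 : N^2 ≤ N^3 := pow_le_pow_right₀ hN (by norm_num)
    rw [div_div, div_le_div_iff₀ (by positivity) (by positivity)]
    have h6 := mul_le_mul_of_nonneg_left h5 (show (0:ℝ) ≤ y^3*(3*π^3) by positivity)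
    have h7 := mul_le_mul_of_nonneg_left h4 (show (0:ℝ) ≤ (3:ℝ) by norm_num)
    have e1 : y^3*(3*π^3) * N^3 = 3*(y^3*(N*π)^3) := by ring
    have e2 : (3:ℝ)*(c*ℓ)^3 = c^3*ℓ^2*(3*ℓ) := by ring
    have e3 : y^3 * (3*π^3*N^2) = y^3*(3*π^3)*N^2 := by ring
    linarith
  have hlb1 : y - y^3/3 ≤ t := harctan ▸ my_arctan_cubic_lb y hy0.le
  have hlb2 : (y - y^3/3)/ℓ ≤ t/ℓ := by gcongr
  have heq2 : (y - y^3/3)/ℓ = y/ℓ - y^3/(3*ℓ) := by ring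
  have hsplit : (c/(2*π) + c^3*ℓ^2/(3*π^3))/N^2 = c/(2*π)/N^2 + c^3*ℓ^2/(3*π^3)/N^2 := by ring
  have habs : |t/ℓ - c/(N*π)| ≤ (c/(2*π) + c^3*ℓ^2/(3*π^3)) / N^2 := by
    rw [abs_le]
    constructor
    · rw [hyℓ] at heq2
      linarith [hlb2, hB, hy3]
    · have : (0:ℝ) ≤ (c/(2*π) + c^3*ℓ^2/(3*π^3)) / N^2 := by positivity
      linarith
  simp only [Real.norm_eq_abs]
  calc |x n - (N * π / ℓ + c / (N * π))| = |t/ℓ - c/(N*π)| := by rw [hE]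
    _ ≤ (c/(2*π) + c^3*ℓ^2/(3*π^3)) / N^2 := habs
    _ = (c/(2*π) + c^3*ℓ^2/(3*π^3)) * |1/N^2| := by
        rw [abs_of_nonneg (by positivity : (0:ℝ) ≤ 1/N^2)]; ring
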